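/- If p is any real polynomial of degree m with p(0) = 1 and A is symmetric positive definite with eigenvalues in [λ_min, λ_max], then max over eigenvalues λ of |p(λ)| is at least 1/T_m((λ_max+λ_min)/(λ_max−λ_min)) when the eigenvalues fill out the interval endpoints; consequently, among all choices of weights ω_1,…,ω_m, the Chebyshev weights minimize max_{λ ∈ [λ_min,λ_max]} |∏_{i=1}^m (1 − ω_i λ)|. -/

import Mathlib

open Real Polynomial


lemma cheb_step (n : ℤ) : Polynomial.Chebyshev.T ℝ (n+1+1)
    = 2 * Polynomial.X * Polynomial.Chebyshev.T ℝ (n+1) - Polynomial.Chebyshev.T ℝ n := by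
  have := Polynomial.Chebyshev.T_add_two ℝ n
  rw [show (n+1+1 : ℤ) = n + 2 from by ring, this]

lemma cheb_one_le : ∀ n : ℕ, ∀ x : ℝ, 1 ≤ x →
    1 ≤ (Polynomial.Chebyshev.T ℝ n).eval x ∧
      (Polynomial.Chebyshev.T ℝ n).eval x ≤ (Polynomial.Chebyshev.T ℝ (n+1)).eval x := by
  intro n
  induction n with
  | zero => intro x hx; simp [Polynomial.Chebyshev.T_zero, Polynomial.Chebyshev.T_one, hx]
  | succ n ih =>
    intro x hx
    obtain ⟨h1, h2⟩ := ih x hx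
    have key : (Polynomial.Chebyshev.T ℝ ((n:ℤ)+1+1)).eval x
        = 2 * x * (Polynomial.Chebyshev.T ℝ ((n:ℤ)+1)).eval x
          - (Polynomial.Chebyshev.T ℝ (n:ℤ)).eval x := by
      rw [cheb_step]; simp
    push_cast at key ⊢
    constructor
    · linarith
    · nlinarith

lemma cheb_natDegree_le : ∀ n : ℕ, (Polynomial.Chebyshev.T ℝ n).natDegree ≤ n ∧
    (Polynomial.Chebyshev.T ℝ (n+1)).natDegree ≤ n + 1 := by
  intro n
  induction n with
  | zero =>
    constructor
    · simp [Polynomial.Chebyshev.T_zero]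
    · simp [Polynomial.Chebyshev.T_one, Polynomial.natDegree_X_le]
  | succ n ih =>
    obtain ⟨h1, h2⟩ := ih
    refine ⟨h2, ?_⟩
    have key := cheb_step (n : ℤ)
    push_cast at key ⊢
    rw [key]
    refine le_trans (Polynomial.natDegree_sub_le _ _) ?_
    simp only [max_le_iff]
    constructor
    · refine le_trans (Polynomial.natDegree_mul_le) ?_
      have : (2 * Polynomial.X : ℝ[X]).natDegree ≤ 1 := by
        refine le_trans (Polynomial.natDegree_mul_le) ?_
        simp [Polynomial.natDegree_X_le]
      omega
    · omega

lemma cheb_abs_le (n : ℤ) (y : ℝ) (hy : y ∈ Set.Icc (-1:ℝ) 1) :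
    |(Polynomial.Chebyshev.T ℝ n).eval y| ≤ 1 := by
  obtain ⟨h1, h2⟩ := hy
  have : y = Real.cos (Real.arccos y) := (Real.cos_arccos h1 h2).symm
  rw [this, Polynomial.Chebyshev.T_real_cos]
  exact Real.abs_cos_le_one _

lemma cheb_cos_pi (n : ℤ) (k : ℕ) (m : ℕ) (hm : 0 < m) (hn : n = m) :
    (Polynomial.Chebyshev.T ℝ n).eval (Real.cos (k * π / m)) = (-1)^k := by
  rw [Polynomial.Chebyshev.T_real_cos, hn]
  have hm' : (m:ℝ) ≠ 0 := Nat.cast_ne_zero.2 hm.ne'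
  rw [show ((m:ℤ):ℝ) * ((k:ℝ) * π / m) = (k:ℝ) * π from by push_cast; field_simp]
  have := Real.cos_nat_mul_pi_sub 0 k
  simpa using this

lemma cheb_lower_bound (m : ℕ) (hm : 0 < m) (lmin lmax : ℝ) (h0 : 0 < lmin) (hll : lmin < lmax)
    (p : Polynomial ℝ) (hdeg : p.degree ≤ m) (hp0 : p.eval 0 = 1) :
    1 / (Polynomial.Chebyshev.T ℝ (m : ℤ)).eval ((lmax + lmin) / (lmax - lmin)) ≤
      sSup ((fun lam => |p.eval lam|) '' Set.Icc lmin lmax) := by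
  have hb : (0:ℝ) < lmax - lmin := by linarith
  set σ : ℝ := (lmax + lmin) / (lmax - lmin) with hσdef
  have hσ : 1 ≤ σ := by rw [hσdef, le_div_iff₀ hb]; linarith
  set Tσ : ℝ := (Polynomial.Chebyshev.T ℝ (m : ℤ)).eval σ with hTσdef
  have hTσ : 1 ≤ Tσ := by
    have := (cheb_one_le m σ hσ).1
    simpa [hTσdef] using this
  have hTσ0 : 0 < Tσ := by linarith
  -- sup properties
  have hcont : Continuous fun lam : ℝ => |p.eval lam| := (Polynomial.continuous p).abs
  have hbdd : BddAbove ((fun lam => |p.eval lam|) '' Set.Icc lmin lmax) :=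
    (isCompact_Icc.image hcont).bddAbove
  set M : ℝ := sSup ((fun lam => |p.eval lam|) '' Set.Icc lmin lmax) with hMdef
  have hub : ∀ t ∈ Set.Icc lmin lmax, |p.eval t| ≤ M := fun t ht =>
    le_csSup hbdd ⟨t, ht, rfl⟩
  by_contra hcon
  push_neg at hcon
  have hM : M < 1 / Tσ := hcon
  -- the linear substitution and composed Chebyshev polynomial
  set L : ℝ[X] := Polynomial.C σ - Polynomial.C (2/(lmax-lmin)) * Polynomial.X with hLdef
  set q : ℝ[X] := (Polynomial.Chebyshev.T ℝ (m : ℤ)).comp L with hqdef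
  have hqeval : ∀ t : ℝ, q.eval t
      = (Polynomial.Chebyshev.T ℝ (m : ℤ)).eval (σ - 2/(lmax-lmin) * t) := by
    intro t; simp [hqdef, hLdef, Polynomial.eval_comp]
  set r : ℝ[X] := q - Polynomial.C Tσ * p with hrdef
  have hr0 : r.eval 0 = 0 := by
    simp [hrdef, hqeval, hp0, hTσdef]
  -- the alternation points
  set t : ℕ → ℝ := fun k => (lmax + lmin - (lmax - lmin) * Real.cos (k * π / m)) / 2
    with htdef
  have hLt : ∀ k : ℕ, σ - 2/(lmax-lmin) * t k = Real.cos (k * π / m) := by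
    intro k; rw [htdef, hσdef]; field_simp; ring
  have htIcc : ∀ k : ℕ, t k ∈ Set.Icc lmin lmax := by
    intro k
    have h1 := Real.neg_one_le_cos ((k:ℝ) * π / m)
    have h2 := Real.cos_le_one ((k:ℝ) * π / m)
    constructor
    · rw [htdef]; dsimp only; nlinarith
    · rw [htdef]; dsimp only; nlinarith
  have hrt : ∀ k : ℕ, r.eval (t k) = (-1)^k - Tσ * p.eval (t k) := by
    intro k
    rw [hrdef]
    simp only [Polynomial.eval_sub, Polynomial.eval_mul, Polynomial.eval_C]
    rw [hqeval, hLt, cheb_cos_pi _ k m hm rfl]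
  have hM0 : 0 ≤ M := le_trans (abs_nonneg _) (hub lmin ⟨le_refl _, hll.le⟩)
  have hbnd : ∀ k : ℕ, |Tσ * p.eval (t k)| < 1 := by
    intro k
    rw [abs_mul, abs_of_pos hTσ0]
    calc Tσ * |p.eval (t k)| ≤ Tσ * M := by
          exact mul_le_mul_of_nonneg_left (hub _ (htIcc k)) hTσ0.le
      _ < Tσ * (1/Tσ) := by exact mul_lt_mul_of_pos_left hM hTσ0
      _ = 1 := by field_simp
  have hpos : ∀ k : ℕ, Even k → 0 < r.eval (t k) := by
    intro k hk
    rw [hrt k, hk.neg_one_pow]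
    have := (abs_lt.1 (hbnd k)).2
    linarith
  have hneg : ∀ k : ℕ, Odd k → r.eval (t k) < 0 := by
    intro k hk
    rw [hrt k, hk.neg_one_pow]
    have := (abs_lt.1 (hbnd k)).1
    linarith
  -- t is strictly monotone up to m
  have htmono : ∀ j k : ℕ, j < k → k ≤ m → t j < t k := by
    intro j k hjk hkm
    have hmpos : (0:ℝ) < m := Nat.cast_pos.2 hm
    have hθj : (j:ℝ) * π / m ∈ Set.Icc 0 π := by
      constructor
      · positivity
      · rw [div_le_iff₀ hmpos]
        have : (j:ℝ) ≤ m := by exact_mod_cast le_of_lt (lt_of_lt_of_le hjk hkm)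
        nlinarith [Real.pi_pos]
    have hθk : (k:ℝ) * π / m ∈ Set.Icc 0 π := by
      constructor
      · positivity
      · rw [div_le_iff₀ hmpos]
        have : (k:ℝ) ≤ m := by exact_mod_cast hkm
        nlinarith [Real.pi_pos]
    have hlt : (j:ℝ) * π / m < (k:ℝ) * π / m := by
      have : (j:ℝ) < k := by exact_mod_cast hjk
      have := Real.pi_pos
      have := Real.pi_pos
      gcongr
    have := Real.strictAntiOn_cos hθj hθk hlt
    rw [htdef]; dsimp only; nlinarith
  -- roots between consecutive alternation points
  have hroot : ∀ k : ℕ, ∃ sx : ℝ, 1 ≤ k → k ≤ m →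
      sx ∈ Set.Ioo (t (k-1)) (t k) ∧ r.eval sx = 0 := by
    intro k
    by_cases hk : 1 ≤ k ∧ k ≤ m
    · obtain ⟨hk1, hkm⟩ := hk
      have hlt : t (k-1) < t k := htmono (k-1) k (by omega) hkm
      have hcontr : ContinuousOn (fun x => r.eval x) (Set.Icc (t (k-1)) (t k)) :=
        (Polynomial.continuous r).continuousOn
      rcases Nat.even_or_odd k with he | ho
      · have h1 : r.eval (t (k-1)) < 0 := by
          refine hneg _ ?_
          rcases he with ⟨c, hc⟩; exact ⟨c-1, by omega⟩
        have h2 : 0 < r.eval (t k) := hpos _ he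
        obtain ⟨sx, hsx, hsx0⟩ := intermediate_value_Ioo hlt.le hcontr ⟨h1, h2⟩
        exact ⟨sx, fun _ _ => ⟨hsx, hsx0⟩⟩
      · have h1 : 0 < r.eval (t (k-1)) := by
          refine hpos _ ?_
          rcases ho with ⟨c, hc⟩; exact ⟨c, by omega⟩
        have h2 : r.eval (t k) < 0 := hneg _ ho
        obtain ⟨sx, hsx, hsx0⟩ := intermediate_value_Ioo' hlt.le hcontr ⟨h2, h1⟩
        exact ⟨sx, fun _ _ => ⟨hsx, hsx0⟩⟩
    · exact ⟨0, fun h1 h2 => absurd ⟨h1, h2⟩ hk⟩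
  choose s hs using hroot
  have hmem : ∀ j : ℕ, 1 ≤ j → j ≤ m → s j ∈ Set.Ioo (t (j-1)) (t j) :=
    fun j h1 h2 => (hs j h1 h2).1
  set f : Fin (m+1) → ℝ := fun j => if (j:ℕ) = 0 then 0 else s (j:ℕ) with hfdef
  have hfmono : StrictMono f := by
    intro j j' hjj'
    have hjj : (j:ℕ) < (j':ℕ) := hjj'
    have hj'm : (j':ℕ) ≤ m := by have := j'.isLt; omega
    have hmem' := hmem (j':ℕ) (by omega) hj'm
    rw [hfdef]; dsimp only
    by_cases hj0 : (j:ℕ) = 0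
    · rw [if_pos hj0, if_neg (by omega)]
      have h1 : lmin ≤ t ((j':ℕ)-1) := (htIcc _).1
      have := hmem'.1
      linarith
    · rw [if_neg hj0, if_neg (by omega)]
      have h1 : s (j:ℕ) < t (j:ℕ) := (hmem (j:ℕ) (by omega) (by omega)).2
      have h2 : t (j:ℕ) ≤ t ((j':ℕ)-1) := by
        rcases eq_or_lt_of_le (show (j:ℕ) ≤ (j':ℕ)-1 by omega) with he | hl
        · rw [he]
        · exact (htmono _ _ hl (by omega)).le
      have := hmem'.1
      linarith
  have hfz : ∀ j : Fin (m+1), r.eval (f j) = 0 := by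
    intro j
    rw [hfdef]; dsimp only
    by_cases hj0 : (j:ℕ) = 0
    · rw [if_pos hj0]; exact hr0
    · rw [if_neg hj0]
      exact (hs _ (by omega) (by have := j.isLt; omega)).2
  have hrdeg : r.natDegree ≤ m := by
    have hqd : q.natDegree ≤ m := by
      rw [hqdef]
      refine le_trans (Polynomial.natDegree_comp_le) ?_
      have h1 : (Polynomial.Chebyshev.T ℝ (m:ℤ)).natDegree ≤ m := (cheb_natDegree_le m).1
      have h2 : L.natDegree ≤ 1 := by
        rw [hLdef]
        refine le_trans (Polynomial.natDegree_sub_le _ _) ?_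
        simp only [max_le_iff, Polynomial.natDegree_C]
        refine ⟨by omega, ?_⟩
        exact le_trans (Polynomial.natDegree_mul_le) (by simp [Polynomial.natDegree_X_le])
      exact le_trans (Nat.mul_le_mul h1 h2) (by omega)
    have hpd : p.natDegree ≤ m := Polynomial.natDegree_le_iff_degree_le.2 hdeg
    rw [hrdef]
    refine le_trans (Polynomial.natDegree_sub_le _ _) ?_
    simp only [max_le_iff]
    exact ⟨hqd, le_trans (Polynomial.natDegree_mul_le) (by simpa using hpd)⟩
  have hr_eq : r = 0 :=
    Polynomial.eq_zero_of_natDegree_lt_card_of_eval_eq_zero r hfmono.injective hfz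
      (by simpa using Nat.lt_succ_of_le hrdeg)
  have hfinal := hpos 0 Even.zero
  rw [hr_eq] at hfinal
  simp at hfinal



lemma cheb_prod_eq (m : ℕ) (hm : 0 < m) (lmin lmax : ℝ) (h0 : 0 < lmin) (hll : lmin < lmax)
    (x : Fin m → ℝ) (hx : ∀ i : Fin m, x i = Real.cos ((2 * (i : ℕ) + 1) * π / (2 * m)))
    (ωc : Fin m → ℝ) (hωc : ∀ i, ωc i = 2 / (lmax + lmin + (lmax - lmin) * x i)) :
    ∀ lam : ℝ,
      (Polynomial.Chebyshev.T ℝ (m : ℤ)).eval ((lmax + lmin) / (lmax - lmin)) *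
          ∏ i : Fin m, (1 - ωc i * lam)
        = (Polynomial.Chebyshev.T ℝ (m : ℤ)).eval
            ((lmax + lmin - 2 * lam) / (lmax - lmin)) := by
  have hb : (0:ℝ) < lmax - lmin := by linarith
  have hmR : (0:ℝ) < m := Nat.cast_pos.2 hm
  set σ : ℝ := (lmax + lmin) / (lmax - lmin) with hσdef
  set Tσ : ℝ := (Polynomial.Chebyshev.T ℝ (m : ℤ)).eval σ with hTσdef
  -- angles
  set θ : Fin m → ℝ := fun i => (2 * (i:ℕ) + 1) * π / (2 * m) with hθdef
  have hθmem : ∀ i, θ i ∈ Set.Icc (0:ℝ) π := by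
    intro i
    have hπ := Real.pi_pos
    constructor
    · rw [hθdef]; positivity
    · rw [hθdef]; dsimp only
      rw [div_le_iff₀ (by positivity)]
      have h1 : (2 * (i:ℕ) + 1 : ℝ) ≤ 2 * m := by
        have : (i:ℕ) < m := i.isLt
        have : ((i:ℕ):ℝ) ≤ (m:ℝ) - 1 := by
          have : ((i:ℕ):ℝ) + 1 ≤ m := by exact_mod_cast i.isLt
          linarith
        linarith
      nlinarith
  have hx1 : ∀ i, -1 ≤ x i := by intro i; rw [hx i]; exact Real.neg_one_le_cos _
  have hx2 : ∀ i, x i ≤ 1 := by intro i; rw [hx i]; exact Real.cos_le_one _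
  have hd : ∀ i, 0 < lmax + lmin + (lmax - lmin) * x i := by
    intro i
    nlinarith [hx1 i, hb, h0, hll]
  set lamr : Fin m → ℝ := fun i => (lmax + lmin + (lmax - lmin) * x i) / 2 with hlamdef
  have hlampos : ∀ i, 0 < lamr i := by
    intro i
    rw [hlamdef]; dsimp only; linarith [hd i]
  -- the polynomials
  set L : ℝ[X] := Polynomial.C σ - Polynomial.C (2/(lmax-lmin)) * Polynomial.X with hLdef
  set q : ℝ[X] := (Polynomial.Chebyshev.T ℝ (m : ℤ)).comp L with hqdef
  have hqeval : ∀ t : ℝ, q.eval t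
      = (Polynomial.Chebyshev.T ℝ (m : ℤ)).eval (σ - 2/(lmax-lmin) * t) := by
    intro t; simp [hqdef, hLdef, Polynomial.eval_comp]
  set P : ℝ[X] := ∏ i : Fin m, (1 - Polynomial.C (ωc i) * Polynomial.X) with hPdef
  have hPeval : ∀ t : ℝ, P.eval t = ∏ i : Fin m, (1 - ωc i * t) := by
    intro t; rw [hPdef, Polynomial.eval_prod]; simp
  set r : ℝ[X] := Polynomial.C Tσ * P - q with hrdef
  -- r vanishes at 0
  have hr0 : r.eval 0 = 0 := by
    simp [hrdef, hPeval, hqeval, hTσdef]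
  -- r vanishes at lamr i
  have hrlam : ∀ i : Fin m, r.eval (lamr i) = 0 := by
    intro i
    have hfac : (1 : ℝ) - ωc i * lamr i = 0 := by
      rw [hωc i, hlamdef]; dsimp only
      field_simp [(hd i).ne']
      ring
    have hP0 : P.eval (lamr i) = 0 := by
      rw [hPeval]
      exact Finset.prod_eq_zero (Finset.mem_univ i) hfac
    have harg : σ - 2/(lmax-lmin) * lamr i = - x i := by
      rw [hσdef, hlamdef]; dsimp only
      field_simp; ring
    have hT0 : (Polynomial.Chebyshev.T ℝ (m : ℤ)).eval (- x i) = 0 := by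
      have hcosneg : - x i = Real.cos (π - θ i) := by
        rw [hx i, Real.cos_pi_sub, hθdef]
      rw [hcosneg, Polynomial.Chebyshev.T_real_cos]
      rw [Real.cos_eq_zero_iff]
      refine ⟨(m:ℤ) - (i:ℕ) - 1, ?_⟩
      rw [hθdef]; dsimp only
      push_cast
      field_simp
      ring
    rw [hrdef]
    simp [hP0, hqeval, harg, hT0]
  -- injective family of m+1 roots
  have hlaminj : Function.Injective lamr := by
    intro i j hij
    have hxij : x i = x j := by
      rw [hlamdef] at hij; dsimp only at hij
      have : (lmax - lmin) * x i = (lmax - lmin) * x j := by linarith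
      exact mul_left_cancel₀ hb.ne' this
    have hθij : θ i = θ j := by
      apply Real.injOn_cos (hθmem i) (hθmem j)
      rw [← hx i, ← hx j] at *
      exact hxij
    have : ((i:ℕ):ℝ) = ((j:ℕ):ℝ) := by
      rw [hθdef] at hθij; dsimp only at hθij
      have hπ := Real.pi_pos
      field_simp at hθij
      linarith
    exact Fin.ext (by exact_mod_cast this)
  set g : Fin (m+1) → ℝ := Fin.cons 0 lamr with hgdef
  have hginj : Function.Injective g := by
    intro a b hab
    rcases Fin.eq_zero_or_eq_succ a with rfl | ⟨a', rfl⟩ <;>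
      rcases Fin.eq_zero_or_eq_succ b with rfl | ⟨b', rfl⟩
    · rfl
    · rw [hgdef] at hab; simp [Fin.cons_zero, Fin.cons_succ] at hab
      exact absurd hab.symm (hlampos b').ne'
    · rw [hgdef] at hab; simp [Fin.cons_zero, Fin.cons_succ] at hab
      exact absurd hab (hlampos a').ne'
    · rw [hgdef] at hab; simp [Fin.cons_succ] at hab
      rw [hlaminj hab]
  have hgz : ∀ j : Fin (m+1), r.eval (g j) = 0 := by
    intro j
    rcases Fin.eq_zero_or_eq_succ j with rfl | ⟨j', rfl⟩
    · rw [hgdef]; simpa [Fin.cons_zero] using hr0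
    · rw [hgdef]; simpa [Fin.cons_succ] using hrlam j'
  -- degree bound
  have hrdeg : r.natDegree ≤ m := by
    have hPd : P.natDegree ≤ m := by
      rw [hPdef]
      refine le_trans (Polynomial.natDegree_prod_le _ _) ?_
      have : ∀ i : Fin m, (1 - Polynomial.C (ωc i) * Polynomial.X).natDegree ≤ 1 := by
        intro i
        refine le_trans (Polynomial.natDegree_sub_le _ _) ?_
        simp only [max_le_iff, Polynomial.natDegree_one]
        refine ⟨by omega, ?_⟩
        exact le_trans (Polynomial.natDegree_mul_le) (by simp [Polynomial.natDegree_X_le])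
      refine le_trans (Finset.sum_le_sum (fun i (_ : i ∈ Finset.univ) => this i)) ?_
      simp
    have hqd : q.natDegree ≤ m := by
      rw [hqdef]
      refine le_trans (Polynomial.natDegree_comp_le) ?_
      have h1 : (Polynomial.Chebyshev.T ℝ (m:ℤ)).natDegree ≤ m := (cheb_natDegree_le m).1
      have h2 : L.natDegree ≤ 1 := by
        rw [hLdef]
        refine le_trans (Polynomial.natDegree_sub_le _ _) ?_
        simp only [max_le_iff, Polynomial.natDegree_C]
        refine ⟨by omega, ?_⟩
        exact le_trans (Polynomial.natDegree_mul_le) (by simp [Polynomial.natDegree_X_le])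
      exact le_trans (Nat.mul_le_mul h1 h2) (by omega)
    rw [hrdef]
    refine le_trans (Polynomial.natDegree_sub_le _ _) ?_
    simp only [max_le_iff]
    exact ⟨le_trans (Polynomial.natDegree_mul_le) (by simpa using hPd), hqd⟩
  have hr_eq : r = 0 :=
    Polynomial.eq_zero_of_natDegree_lt_card_of_eval_eq_zero r hginj hgz
      (by simpa using Nat.lt_succ_of_le hrdeg)
  intro lam
  have := congrArg (Polynomial.eval lam) hr_eq
  rw [hrdef] at this
  simp only [Polynomial.eval_sub, Polynomial.eval_mul, Polynomial.eval_C,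
    Polynomial.eval_zero] at this
  rw [hPeval, hqeval] at this
  have harg2 : σ - 2/(lmax-lmin) * lam = (lmax + lmin - 2*lam)/(lmax-lmin) := by
    rw [hσdef]; field_simp
  rw [harg2] at this
  linarith [this]

/-- Any real polynomial `p` with `deg p ≤ m` and `p(0) = 1` has sup norm on
`[λ_min, λ_max]` at least `1/T_m((λ_max+λ_min)/(λ_max−λ_min))`; consequently, the Chebyshev
weights minimize `sup_{λ ∈ [λ_min,λ_max]} |∏ (1 − ω_i λ)|` over all choices of weights. -/
theorem chebyshev_weights_optimal
    (m : ℕ) (hm : 0 < m) (lmin lmax : ℝ) (h0 : 0 < lmin) (hll : lmin < lmax)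
    (x : Fin m → ℝ) (hx : ∀ i : Fin m, x i = Real.cos ((2 * (i : ℕ) + 1) * π / (2 * m)))
    (ωc : Fin m → ℝ) (hωc : ∀ i, ωc i = 2 / (lmax + lmin + (lmax - lmin) * x i)) :
    (∀ p : Polynomial ℝ, p.degree ≤ m → p.eval 0 = 1 →
        1 / (Polynomial.Chebyshev.T ℝ (m : ℤ)).eval ((lmax + lmin) / (lmax - lmin)) ≤
          sSup ((fun lam => |p.eval lam|) '' Set.Icc lmin lmax)) ∧
    (∀ ω : Fin m → ℝ,
        sSup ((fun lam => |∏ i : Fin m, (1 - ωc i * lam)|) '' Set.Icc lmin lmax) ≤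
          sSup ((fun lam => |∏ i : Fin m, (1 - ω i * lam)|) '' Set.Icc lmin lmax)) := by
  have hb : (0:ℝ) < lmax - lmin := by linarith
  have hσ : 1 ≤ (lmax + lmin) / (lmax - lmin) := by rw [le_div_iff₀ hb]; linarith
  have hTσ : 1 ≤ (Polynomial.Chebyshev.T ℝ (m:ℤ)).eval ((lmax + lmin) / (lmax - lmin)) :=
    (cheb_one_le m _ hσ).1
  have hTσ0 : (0:ℝ) < (Polynomial.Chebyshev.T ℝ (m:ℤ)).eval ((lmax + lmin) / (lmax - lmin)) :=
    lt_of_lt_of_le one_pos hTσ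
  have part1 : ∀ p : Polynomial ℝ, p.degree ≤ m → p.eval 0 = 1 →
      1 / (Polynomial.Chebyshev.T ℝ (m : ℤ)).eval ((lmax + lmin) / (lmax - lmin)) ≤
        sSup ((fun lam => |p.eval lam|) '' Set.Icc lmin lmax) :=
    fun p hd h1 => cheb_lower_bound m hm lmin lmax h0 hll p hd h1
  refine ⟨part1, ?_⟩
  intro ω
  have hkey := cheb_prod_eq m hm lmin lmax h0 hll x hx ωc hωc
  have hup : sSup ((fun lam => |∏ i : Fin m, (1 - ωc i * lam)|) '' Set.Icc lmin lmax)
      ≤ 1 / (Polynomial.Chebyshev.T ℝ (m:ℤ)).eval ((lmax + lmin) / (lmax - lmin)) := by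
    apply Real.sSup_le
    · rintro y ⟨lam, hlam, rfl⟩
      have hprod : ∏ i : Fin m, (1 - ωc i * lam)
          = (Polynomial.Chebyshev.T ℝ (m:ℤ)).eval ((lmax + lmin - 2*lam)/(lmax-lmin))
            / (Polynomial.Chebyshev.T ℝ (m:ℤ)).eval ((lmax + lmin) / (lmax - lmin)) := by
        rw [eq_div_iff hTσ0.ne']
        linarith [hkey lam]
      have harg : (lmax + lmin - 2*lam)/(lmax-lmin) ∈ Set.Icc (-1:ℝ) 1 := by
        obtain ⟨h1, h2⟩ := hlam
        constructor
        · rw [le_div_iff₀ hb]; linarith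
        · rw [div_le_iff₀ hb]; linarith
      have habs := cheb_abs_le (m:ℤ) _ harg
      simp only
      rw [hprod, abs_div, abs_of_pos hTσ0]
      gcongr
    · positivity
  refine le_trans hup ?_
  set Pω : ℝ[X] := ∏ i : Fin m, (1 - Polynomial.C (ω i) * Polynomial.X) with hPdef
  have hnd : Pω.natDegree ≤ m := by
    rw [hPdef]
    refine le_trans (Polynomial.natDegree_prod_le _ _) ?_
    have hfac : ∀ i : Fin m, (1 - Polynomial.C (ω i) * Polynomial.X).natDegree ≤ 1 := by
      intro i
      refine le_trans (Polynomial.natDegree_sub_le _ _) ?_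
      simp only [max_le_iff, Polynomial.natDegree_one]
      refine ⟨by omega, ?_⟩
      exact le_trans (Polynomial.natDegree_mul_le) (by simp [Polynomial.natDegree_X_le])
    refine le_trans (Finset.sum_le_sum (fun i (_ : i ∈ Finset.univ) => hfac i)) ?_
    simp
  have hdeg : Pω.degree ≤ m := Polynomial.natDegree_le_iff_degree_le.1 hnd
  have h1 : Pω.eval 0 = 1 := by rw [hPdef, Polynomial.eval_prod]; simp
  have hlow := part1 Pω hdeg h1
  have himg : (fun lam => |Pω.eval lam|) = fun lam => |∏ i : Fin m, (1 - ω i * lam)| := by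
    funext lam
    rw [hPdef, Polynomial.eval_prod]
    simp
  rw [himg] at hlow
  exact hlow
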